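/- A Hausdorff locally convex space E over ℝ is k-reflexive (i.e., E is k-quasi-complete and the canonical evaluation map E → (E'_k)'_k is a topological isomorphism) if and only if the canonical evaluation map E → (E'_c)'_c is a topological isomorphism and both E and its Arens dual E'_c are k-quasi-complete. -/

import Mathlib

open Filter Topology Set Bornology Pointwise

/-- A sequence in a locally convex space is *Mackey-Cauchy* if there are a bounded
absolutely convex set `B` and a double sequence of nonnegative reals `c` tending to `0`
such that `x n - x m ∈ c n m • B` for all `n, m`. -/
def MackeyCauchy (E : Type*) [AddCommGroup E] [Module ℝ E] [TopologicalSpace E]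
    (x : ℕ → E) : Prop :=
  ∃ (B : Set E) (c : ℕ → ℕ → ℝ),
    IsVonNBounded ℝ B ∧ Convex ℝ B ∧ Balanced ℝ B ∧
    (∀ n m, 0 ≤ c n m) ∧
    Tendsto (fun p : ℕ × ℕ => c p.1 p.2) atTop (𝓝 (0 : ℝ)) ∧
    ∀ n m, x n - x m ∈ c n m • B

/-- A locally convex space is *Mackey-complete* if every Mackey-Cauchy sequence converges. -/
def MackeyComplete (E : Type*) [AddCommGroup E] [Module ℝ E] [TopologicalSpace E] : Prop :=
  ∀ x : ℕ → E, MackeyCauchy E x → ∃ l : E, Tendsto x atTop (𝓝 l)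

/-- A locally convex space is *k-quasi-complete* if the closed absolutely convex hull of
every compact set is compact. -/
def KQuasiComplete (E : Type*) [AddCommGroup E] [Module ℝ E] [TopologicalSpace E] : Prop :=
  ∀ K : Set E, IsCompact K → IsCompact (closure (convexHull ℝ (balancedHull ℝ K)))

variable (E : Type*) [AddCommGroup E] [Module ℝ E] [TopologicalSpace E]

/-- The Arens dual `E'_c`: the topological dual with the topology of uniform convergence on
absolutely convex compact subsets of `E`. -/
abbrev ArensDual : Type _ :=
  UniformConvergenceCLM (RingHom.id ℝ) ℝ {K : Set E | Convex ℝ K ∧ Balanced ℝ K ∧ IsCompact K}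

/-- The Mackey dual `E'_μ`: the topological dual with the topology of uniform convergence on
absolutely convex weakly compact subsets of `E`. -/
abbrev MackeyDual : Type _ :=
  UniformConvergenceCLM (RingHom.id ℝ) ℝ
    {K : Set E | Convex ℝ K ∧ Balanced ℝ K ∧ IsCompact (⇑(toWeakSpace ℝ E) '' K)}

/-- The Schwartz ε-product `E ε F`: continuous linear maps from the Arens dual `E'_c` to `F`,
with the topology of uniform convergence on equicontinuous subsets of `E'`. -/
abbrev EpsProduct (F : Type*) [AddCommGroup F] [Module ℝ F] [TopologicalSpace F]
    [IsTopologicalAddGroup F] : Type _ :=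
  UniformConvergenceCLM (RingHom.id ℝ) F
    {H : Set (ArensDual E) | Equicontinuous fun f : H => (f.1 : E → ℝ)}

/-- The η-product `E η F`: continuous linear maps from the Mackey dual `E'_μ` to `F`,
with the topology of uniform convergence on equicontinuous subsets of `E'`. -/
abbrev EtaProduct (F : Type*) [AddCommGroup F] [Module ℝ F] [TopologicalSpace F]
    [IsTopologicalAddGroup F] : Type _ :=
  UniformConvergenceCLM (RingHom.id ℝ) F
    {H : Set (MackeyDual E) | Equicontinuous fun f : H => (f.1 : E → ℝ)}

noncomputable section

instance Submodule.instUniformAddGroup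
    {R X : Type*} [Ring R] [AddCommGroup X] [Module R X] [UniformSpace X] [IsUniformAddGroup X]
    (M : Submodule R X) : IsUniformAddGroup M :=
  IsUniformAddGroup.comap M.subtype

instance Submodule.instUniformContinuousConstSMul
    {X : Type*} [AddCommGroup X] [Module ℝ X] [UniformSpace X]
    [UniformContinuousConstSMul ℝ X]
    (M : Submodule ℝ X) : UniformContinuousConstSMul ℝ M :=
  ⟨fun c => ((uniformContinuous_const_smul c).comp uniformContinuous_subtype_val).subtype_mk _⟩

variable (X : Type*) [AddCommGroup X] [Module ℝ X] [UniformSpace X] [IsUniformAddGroup X]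
  [UniformContinuousConstSMul ℝ X]

/-- The k-quasi-completion `X̂^K` of `X`: the intersection of all k-quasi-complete subspaces
of the completion of `X` containing `X`, with the induced topology. -/
abbrev kQuasiCompletion : Submodule ℝ (UniformSpace.Completion X) :=
  sInf {G : Submodule ℝ (UniformSpace.Completion X) |
    Set.range ((↑) : X → UniformSpace.Completion X) ⊆ (G : Set (UniformSpace.Completion X)) ∧
    KQuasiComplete G}

/-- The canonical map of `X` into its k-quasi-completion. -/
def toKQuasiCompletion (x : X) : kQuasiCompletion X :=
  ⟨(x : UniformSpace.Completion X), Submodule.mem_sInf.2 fun _ hG => hG.1 ⟨x, rfl⟩⟩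

/-- `X'_k`, the Arens dual of the k-quasi-completion of `X`. -/
abbrev kDual : Type _ := ArensDual ↥(kQuasiCompletion X)


section AuxiliaryLemmas

open UniformSpace Function
open scoped UniformConvergence

/-! ### Image lemmas -/

section ImageLemmas

variable {A B : Type*} [AddCommGroup A] [Module ℝ A] [AddCommGroup B] [Module ℝ B]

theorem Balanced.linear_image {s : Set A} (hs : Balanced ℝ s) (f : A →ₗ[ℝ] B) :
    Balanced ℝ (f '' s) := by
  intro a ha
  rintro y ⟨-, ⟨x, hx, rfl⟩, rfl⟩
  exact ⟨a • x, hs a ha (smul_mem_smul_set hx), map_smul f a x⟩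

theorem Balanced.closure' {s : Set A} [TopologicalSpace A] [ContinuousConstSMul ℝ A]
    (h : Balanced ℝ s) : Balanced ℝ (closure s) :=
  fun a ha => (smul_closure_subset a s).trans (closure_mono (h a ha))

theorem image_balancedHull (f : A →ₗ[ℝ] B) (s : Set A) :
    f '' balancedHull ℝ s = balancedHull ℝ (f '' s) := by
  ext y
  constructor
  · rintro ⟨x, hx, rfl⟩
    rw [mem_balancedHull_iff] at hx ⊢
    obtain ⟨r, hr, x', hx', rfl⟩ := hx
    exact ⟨r, hr, f x', ⟨x', hx', rfl⟩, (map_smul f r x').symm⟩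
  · rw [mem_balancedHull_iff]
    rintro ⟨r, hr, -, ⟨x, hx, rfl⟩, rfl⟩
    exact ⟨r • x, (balancedHull.balanced (𝕜 := ℝ) s) r hr
      (smul_mem_smul_set (subset_balancedHull ℝ hx)), map_smul f r x⟩

theorem image_cvx_bal (f : A →ₗ[ℝ] B) (s : Set A) :
    f '' convexHull ℝ (balancedHull ℝ s) = convexHull ℝ (balancedHull ℝ (f '' s)) := by
  rw [f.image_convexHull, image_balancedHull]

variable [TopologicalSpace A] [TopologicalSpace B]

theorem KQuasiComplete.congr (e : A ≃L[ℝ] B) (h : KQuasiComplete A) : KQuasiComplete B := by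
  intro K hK
  have h2 := h _ (hK.image e.symm.continuous)
  have hcl : ∀ s : Set A, e '' closure s = closure (e '' s) := fun s =>
    e.toHomeomorph.image_closure s
  have hcvx : ∀ s : Set A, e '' convexHull ℝ s = convexHull ℝ (e '' s) := fun s =>
    (e : A →ₗ[ℝ] B).image_convexHull s
  have hbal : ∀ s : Set A, e '' balancedHull ℝ s = balancedHull ℝ (e '' s) := fun s =>
    image_balancedHull (e : A →ₗ[ℝ] B) s
  have hK2 : e '' (e.symm '' K) = K := by ext y; simp
  have key : e '' closure (convexHull ℝ (balancedHull ℝ (e.symm '' K))) =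
      closure (convexHull ℝ (balancedHull ℝ K)) := by
    rw [hcl, hcvx, hbal, hK2]
  rw [← key]
  exact h2.image e.continuous

/-- A continuous linear equivalence built from an inducing bijective linear map. -/
noncomputable def clEquivOfInducing (f : A →ₗ[ℝ] B) (hc : Continuous f)
    (hi : Topology.IsInducing f) (hb : Bijective f) : A ≃L[ℝ] B := by
  refine ⟨LinearEquiv.ofBijective f hb, hc, ?_⟩
  rw [hi.continuous_iff]
  exact continuous_id.congr fun y =>
    ((LinearEquiv.ofBijective f hb).apply_symm_apply y).symm

@[simp] theorem clEquivOfInducing_apply (f : A →ₗ[ℝ] B) (hc : Continuous f)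
    (hi : Topology.IsInducing f) (hb : Bijective f) (x : A) :
    clEquivOfInducing f hc hi hb x = f x := rfl

end ImageLemmas

/-! ### Submodules of locally convex spaces are locally convex -/

instance Submodule.instLocallyConvexSpaceReal {C : Type*} [AddCommGroup C] [Module ℝ C]
    [TopologicalSpace C] [LocallyConvexSpace ℝ C] (M : Submodule ℝ C) :
    LocallyConvexSpace ℝ M :=
  LocallyConvexSpace.induced M.subtype

/-! ### The completion of a locally convex TVS is a locally convex TVS -/

/-- The canonical linear map into the completion. -/
noncomputable def coeCompletionₗ : X →ₗ[ℝ] Completion X where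
  toFun := ((↑) : X → Completion X)
  map_add' := Completion.coe_add
  map_smul' c x := Completion.coe_smul c x

section CompletionTVS

variable [ContinuousSMul ℝ X] [LocallyConvexSpace ℝ X]

theorem completion_nhds_zero_hasBasis :
    (𝓝 (0 : Completion X)).HasBasis
      (fun W : Set X => W ∈ 𝓝 0 ∧ Balanced ℝ W ∧ Convex ℝ W)
      (fun W => closure (((↑) : X → Completion X) '' W)) := by
  constructor
  intro U
  constructor
  · intro hU
    obtain ⟨V, ⟨hV, hVc⟩, hVU⟩ := (closed_nhds_basis (0 : Completion X)).mem_iff.1 hU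
    have hW0 : ((↑) : X → Completion X) ⁻¹' V ∈ 𝓝 (0 : X) := by
      have := (Completion.continuous_coe X).continuousAt (x := (0 : X))
      rw [ContinuousAt, Completion.coe_zero] at this
      exact this hV
    obtain ⟨W, ⟨hW, hWb, hWc⟩, hWsub⟩ := (nhds_hasBasis_absConvex ℝ X).mem_iff.1 hW0
    refine ⟨W, ⟨hW, hWb, hWc⟩, subset_trans ?_ hVU⟩
    have : closure (((↑) : X → Completion X) '' W) ⊆ closure V :=
      closure_mono (subset_trans (Set.image_mono hWsub) (Set.image_preimage_subset _ _))
    rwa [hVc.closure_eq] at this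
  · rintro ⟨W, ⟨hW, -, -⟩, hsub⟩
    refine mem_of_superset ?_ hsub
    have := (Completion.isDenseInducing_coe (α := X)).closure_image_mem_nhds hW
    rwa [Completion.coe_zero] at this

theorem balanced_closure_image_coe {W : Set X} (hWb : Balanced ℝ W) :
    Balanced ℝ (closure (((↑) : X → Completion X) '' W)) :=
  (hWb.linear_image (coeCompletionₗ X)).closure'

instance Completion.instContinuousSMulReal : ContinuousSMul ℝ (Completion X) := by
  apply ContinuousSMul.of_nhds_zero
  · rw [(completion_nhds_zero_hasBasis X).tendsto_right_iff]
    rintro W ⟨hW, hWb, hWc⟩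
    have hV : closure (((↑) : X → Completion X) '' W) ∈ 𝓝 (0 : Completion X) :=
      (completion_nhds_zero_hasBasis X).mem_of_mem ⟨hW, hWb, hWc⟩
    filter_upwards [Filter.prod_mem_prod (Metric.closedBall_mem_nhds (0 : ℝ) one_pos) hV]
      with p hp
    have ha : ‖p.1‖ ≤ 1 := by
      simpa [Real.norm_eq_abs, Real.dist_eq] using Metric.mem_closedBall.1 hp.1
    exact balanced_closure_image_coe X hWb p.1 ha (smul_mem_smul_set hp.2)
  · intro m
    rw [(completion_nhds_zero_hasBasis X).tendsto_right_iff]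
    rintro W ⟨hW, hWb, hWc⟩
    have hV : closure (((↑) : X → Completion X) '' W) ∈ 𝓝 (0 : Completion X) :=
      (completion_nhds_zero_hasBasis X).mem_of_mem ⟨hW, hWb, hWc⟩
    obtain ⟨V₁, hV₁, hhalf⟩ := exists_nhds_zero_half hV
    obtain ⟨W₀, ⟨hW₀, hW₀b, hW₀c⟩, hW₀sub⟩ :=
      (completion_nhds_zero_hasBasis X).mem_iff.1 hV₁
    set V₀ := closure (((↑) : X → Completion X) '' W₀) with hV₀def
    have hV₀mem : V₀ ∈ 𝓝 (0 : Completion X) :=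
      (completion_nhds_zero_hasBasis X).mem_of_mem ⟨hW₀, hW₀b, hW₀c⟩
    have hV₀b : Balanced ℝ V₀ := balanced_closure_image_coe X hW₀b
    have hmem : {y : Completion X | y - m ∈ V₀} ∈ 𝓝 m := by
      have h0 : Continuous fun y : Completion X => y - m := continuous_id.sub continuous_const
      have := h0.continuousAt (x := m)
      rw [ContinuousAt, sub_self] at this
      exact this hV₀mem
    obtain ⟨y, hy1, x, rfl⟩ :=
      mem_closure_iff_nhds.1 (Completion.denseRange_coe (α := X) m) _ hmem
    set w : Completion X := (x : Completion X) - m with hwdef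
    have hw : w ∈ V₀ := hy1
    have ht : Tendsto (fun a : ℝ => a • (x : Completion X)) (𝓝 0) (𝓝 0) := by
      have h2 : Tendsto (fun a : ℝ => a • x) (𝓝 (0 : ℝ)) (𝓝 (0 : X)) := by
        have := (tendsto_id (x := 𝓝 (0 : ℝ))).smul_const x
        simpa using this
      have h3 := ((Completion.continuous_coe X).tendsto (0 : X)).comp h2
      simpa [Function.comp_def, Completion.coe_smul, Completion.coe_zero] using h3
    filter_upwards [ht.eventually_mem hV₀mem,
      Metric.closedBall_mem_nhds (0 : ℝ) one_pos] with a h1 h2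
    have hanorm : ‖a‖ ≤ 1 := by
      simpa [Real.norm_eq_abs, Real.dist_eq] using Metric.mem_closedBall.1 h2
    have key : a • m = a • (x : Completion X) + (-a) • w := by
      have hm : m = (x : Completion X) - w := by rw [hwdef]; abel
      rw [hm, smul_sub, neg_smul, sub_eq_add_neg]
    rw [key]
    exact hhalf _ (hW₀sub h1) _ (hW₀sub (hV₀b (-a) (by simpa using hanorm)
      (smul_mem_smul_set hw)))
  · intro a
    exact ((continuous_const_smul a).tendsto (0 : Completion X)).mono_right
      (by rw [smul_zero])

instance Completion.instLocallyConvexSpaceReal : LocallyConvexSpace ℝ (Completion X) :=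
  LocallyConvexSpace.ofBasisZero ℝ _ _ _ (completion_nhds_zero_hasBasis X)
    (fun _ hW => (hW.2.2.linear_image (coeCompletionₗ X)).closure)

/-! ### k-quasi-completeness of the completion and of the k-quasi-completion -/

theorem kQuasiComplete_completion : KQuasiComplete (Completion X) := by
  intro K hK
  rw [show convexHull ℝ (balancedHull ℝ K) = absConvexHull ℝ K from
    (absConvexHull_eq_convexHull_balancedHull ℝ).symm]
  have htb : TotallyBounded (absConvexHull ℝ K) :=
    totallyBounded_absConvexHull.2 hK.totallyBounded
  exact isCompact_iff_totallyBounded_isComplete.2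
    ⟨htb.closure, isClosed_closure.isComplete⟩

theorem kQuasiComplete_kQuasiCompletion : KQuasiComplete ↥(kQuasiCompletion X) := by
  intro K hK
  have hv : Topology.IsInducing ((↑) : ↥(kQuasiCompletion X) → Completion X) :=
    Topology.IsInducing.subtypeVal
  have hK' : IsCompact (Subtype.val '' K) := hK.image continuous_subtype_val
  set T := closure (convexHull ℝ (balancedHull ℝ (Subtype.val '' K))) with hT
  have hTc : IsCompact T := kQuasiComplete_completion X _ hK'
  have hTM : T ⊆ (kQuasiCompletion X : Set (Completion X)) := by
    intro t ht
    have : ∀ G ∈ {G : Submodule ℝ (Completion X) |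
        Set.range ((↑) : X → Completion X) ⊆ (G : Set (Completion X)) ∧ KQuasiComplete G},
        t ∈ G := by
      intro G hG
      have hMG : kQuasiCompletion X ≤ G := sInf_le hG
      set j : ↥(kQuasiCompletion X) → ↥G := fun m => ⟨m.1, hMG m.2⟩ with hj
      have hjc : Continuous j := Continuous.subtype_mk continuous_subtype_val _
      have hKG : IsCompact (j '' K) := hK.image hjc
      have hCG := hG.2 _ hKG
      have himg : IsCompact (Subtype.val '' closure (convexHull ℝ (balancedHull ℝ (j '' K)))) :=
        hCG.image continuous_subtype_val
      have hclosed : IsClosed (Subtype.val '' closure (convexHull ℝ (balancedHull ℝ (j '' K)))) :=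
        himg.isClosed
      have hvj : Subtype.val '' K = Subtype.val '' (j '' K) := by
        rw [Set.image_image]
      have him := image_cvx_bal (Submodule.subtype G) (j '' K)
      simp only [Submodule.coe_subtype] at him
      have hsub : convexHull ℝ (balancedHull ℝ (Subtype.val '' K)) ⊆
          Subtype.val '' closure (convexHull ℝ (balancedHull ℝ (j '' K))) := by
        rw [hvj, ← him]
        exact Set.image_mono subset_closure
      have : T ⊆ Subtype.val '' closure (convexHull ℝ (balancedHull ℝ (j '' K))) := by
        rw [hT]
        exact closure_minimal hsub hclosed
      obtain ⟨g, -, hg⟩ := this ht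
      rw [← hg]; exact g.2
    exact Submodule.mem_sInf.2 this
  have hval : (Subtype.val '' (convexHull ℝ (balancedHull ℝ K)) : Set (Completion X)) =
      convexHull ℝ (balancedHull ℝ (Subtype.val '' K)) := by
    have := image_cvx_bal (Submodule.subtype (kQuasiCompletion X)) K
    simpa only [Submodule.coe_subtype] using this
  have hcl : closure (convexHull ℝ (balancedHull ℝ K)) = Subtype.val ⁻¹' T := by
    rw [hv.closure_eq_preimage_closure_image, hval, hT]
  rw [hcl]
  exact hv.isCompact_preimage' hTc (by rwa [Subtype.range_val])

/-! ### The canonical map into the k-quasi-completion -/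

/-- `toKQuasiCompletion` as a linear map. -/
noncomputable def toKQuasiCompletionₗ : X →ₗ[ℝ] ↥(kQuasiCompletion X) where
  toFun := toKQuasiCompletion X
  map_add' x y := Subtype.ext (Completion.coe_add x y)
  map_smul' c x := Subtype.ext (Completion.coe_smul c x)

theorem continuous_toKQuasiCompletion : Continuous (toKQuasiCompletion X) :=
  (Completion.continuous_coe X).subtype_mk _

theorem isInducing_toKQuasiCompletion [T0Space X] :
    Topology.IsInducing (toKQuasiCompletion X) := by
  apply Topology.IsInducing.of_comp (continuous_toKQuasiCompletion X) continuous_subtype_val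
  exact (Completion.isUniformEmbedding_coe X).isInducing

theorem injective_toKQuasiCompletion [T0Space X] :
    Injective (toKQuasiCompletion X) := fun x y h =>
  (Completion.coe_injective X) (congrArg Subtype.val h)

variable [T0Space X]

/-- The canonical equivalence when the canonical map is surjective. -/
noncomputable def kqcEquiv (hsurj : Surjective (toKQuasiCompletion X)) :
    X ≃L[ℝ] ↥(kQuasiCompletion X) :=
  clEquivOfInducing (toKQuasiCompletionₗ X) (continuous_toKQuasiCompletion X)
    (isInducing_toKQuasiCompletion X) ⟨injective_toKQuasiCompletion X, hsurj⟩

@[simp] theorem kqcEquiv_apply (hsurj : Surjective (toKQuasiCompletion X)) (x : X) :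
    kqcEquiv X hsurj x = toKQuasiCompletion X x := rfl

theorem surjective_toKQuasiCompletion (h : KQuasiComplete X) :
    Surjective (toKQuasiCompletion X) := by
  set M₀ : Submodule ℝ (Completion X) := LinearMap.range (coeCompletionₗ X) with hM₀
  let f : X →ₗ[ℝ] ↥M₀ := (coeCompletionₗ X).rangeRestrict
  have hfc : Continuous f := (Completion.continuous_coe X).subtype_mk _
  have hfi : Topology.IsInducing f :=
    Topology.IsInducing.of_comp hfc continuous_subtype_val
      (Completion.isUniformEmbedding_coe X).isInducing
  have hbij : Bijective f :=
    ⟨fun a b hab => Completion.coe_injective X (congrArg Subtype.val hab),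
      LinearMap.surjective_rangeRestrict _⟩
  have hkqc0 : KQuasiComplete ↥M₀ :=
    KQuasiComplete.congr (clEquivOfInducing f hfc hfi hbij) h
  have hle : kQuasiCompletion X ≤ M₀ := by
    apply sInf_le
    exact ⟨by rintro y ⟨x, rfl⟩; exact ⟨x, rfl⟩, hkqc0⟩
  rintro ⟨y, hy⟩
  obtain ⟨x, hx⟩ := hle hy
  exact ⟨x, Subtype.ext hx⟩

end CompletionTVS

/-! ### API for the Arens dual -/

section ArensDualAPI

variable {F G : Type*} [AddCommGroup F] [Module ℝ F] [TopologicalSpace F]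
  [AddCommGroup G] [Module ℝ G] [TopologicalSpace G]

/-- The family of absolutely convex compact subsets. -/
abbrev arensFamily (F : Type*) [AddCommGroup F] [Module ℝ F] [TopologicalSpace F] :
    Set (Set F) := {K : Set F | Convex ℝ K ∧ Balanced ℝ K ∧ IsCompact K}

theorem arens_family_sUnion [ContinuousSMul ℝ F] :
    ⋃₀ {K : Set F | Convex ℝ K ∧ Balanced ℝ K ∧ IsCompact K} = univ := by
  ext x
  simp only [Set.mem_sUnion, Set.mem_univ, iff_true]
  refine ⟨(fun t : ℝ => t • x) '' Set.Icc (-1) 1, ⟨?_, ?_, ?_⟩,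
    ⟨1, ⟨by norm_num, by norm_num⟩, one_smul ℝ x⟩⟩
  · rintro - ⟨s, hs, rfl⟩ - ⟨t, ht, rfl⟩ a b ha hb hab
    refine ⟨a * s + b * t, ?_, by
      show (a * s + b * t) • x = a • s • x + b • t • x
      rw [add_smul, mul_smul, mul_smul]⟩
    rw [Set.mem_Icc] at hs ht ⊢
    constructor <;> nlinarith [hs.1, hs.2, ht.1, ht.2]
  · intro c hc
    rintro - ⟨-, ⟨t, ht, rfl⟩, rfl⟩
    refine ⟨c * t, ?_, by
      show (c * t) • x = c • t • x
      rw [mul_smul]⟩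
    rw [Set.mem_Icc] at ht ⊢
    rw [Real.norm_eq_abs] at hc
    constructor <;> nlinarith [abs_le.1 hc, ht.1, ht.2, abs_nonneg c]
  · exact isCompact_Icc.image (continuous_id.smul continuous_const)

theorem arens_family_directed [IsTopologicalAddGroup F] [ContinuousConstSMul ℝ F]
    (h : KQuasiComplete F) :
    DirectedOn (· ⊆ ·) {K : Set F | Convex ℝ K ∧ Balanced ℝ K ∧ IsCompact K} := by
  intro K₁ h₁ K₂ h₂
  refine ⟨closure (convexHull ℝ (balancedHull ℝ (K₁ ∪ K₂))),
    ⟨(convex_convexHull ℝ _).closure, ((balancedHull.balanced _).convexHull).closure',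
      h _ (h₁.2.2.union h₂.2.2)⟩, ?_, ?_⟩
  · exact subset_trans (subset_trans (Set.subset_union_left.trans (subset_balancedHull ℝ))
      (subset_convexHull ℝ _)) subset_closure
  · exact subset_trans (subset_trans (Set.subset_union_right.trans (subset_balancedHull ℝ))
      (subset_convexHull ℝ _)) subset_closure

theorem arensDual_t2Space [ContinuousSMul ℝ F] : T2Space (ArensDual F) :=
  UniformConvergenceCLM.t2Space _ _ _ arens_family_sUnion

theorem arensDual_continuousSMul {F : Type*} [AddCommGroup F] [Module ℝ F] [UniformSpace F]
    [IsUniformAddGroup F] [ContinuousSMul ℝ F] : ContinuousSMul ℝ (ArensDual F) :=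
  UniformConvergenceCLM.continuousSMul _ _ _
    (fun _ hS => hS.2.2.totallyBounded.isVonNBounded ℝ)

theorem arensDual_locallyConvex [IsTopologicalAddGroup F] [ContinuousConstSMul ℝ F]
    (h : KQuasiComplete F) : LocallyConvexSpace ℝ (ArensDual F) :=
  UniformConvergenceCLM.locallyConvexSpace ℝ _
    ⟨∅, convex_empty, balanced_empty, isCompact_empty⟩ (arens_family_directed h)

/-- Evaluation at a point as a continuous linear functional on the Arens dual. -/
noncomputable def evalArensCLM [ContinuousSMul ℝ F] (y : F) : ArensDual F →L[ℝ] ℝ :=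
  haveI : ContinuousEvalConst (ArensDual F) F ℝ :=
    UniformConvergenceCLM.continuousEvalConst _ _ _ arens_family_sUnion
  { toFun := fun f => f y
    map_add' := fun _ _ => rfl
    map_smul' := fun _ _ => rfl
    cont := continuous_eval_const y }

@[simp] theorem evalArensCLM_apply [ContinuousSMul ℝ F] (y : F) (f : ArensDual F) :
    evalArensCLM y f = f y := rfl

theorem arens_mapsTo (e : F ≃L[ℝ] G) :
    Set.MapsTo (fun S => ⇑e '' S) {K : Set F | Convex ℝ K ∧ Balanced ℝ K ∧ IsCompact K}
      {K : Set G | Convex ℝ K ∧ Balanced ℝ K ∧ IsCompact K} := by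
  rintro S ⟨h1, h2, h3⟩
  exact ⟨h1.linear_image (e : F →ₗ[ℝ] G), h2.linear_image (e : F →ₗ[ℝ] G),
    h3.image e.continuous⟩

/-- Precomposition with `e` as a map between Arens duals. -/
noncomputable def arensPrecomp (e : F ≃L[ℝ] G) (f : ArensDual G) : ArensDual F :=
  (f : G →L[ℝ] ℝ).comp (e : F →L[ℝ] G)

@[simp] theorem arensPrecomp_apply (e : F ≃L[ℝ] G) (f : ArensDual G) (x : F) :
    arensPrecomp e f x = f (e x) := rfl

theorem arensDualCongr_continuous_aux (e : F ≃L[ℝ] G) :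
    Continuous (arensPrecomp e) := by
  rw [(UniformConvergenceCLM.isEmbedding_coeFn (RingHom.id ℝ) ℝ _).continuous_iff]
  change Continuous ((fun g : G →ᵤ[arensFamily G] ℝ =>
      UniformOnFun.ofFun _ ((UniformOnFun.toFun _ g) ∘ ⇑e)) ∘ DFunLike.coe)
  exact (UniformOnFun.precomp_uniformContinuous (arens_mapsTo e)).continuous.comp
    (UniformConvergenceCLM.isEmbedding_coeFn _ _ _).continuous

/-- The contravariant functorial action of a linear homeomorphism on Arens duals. -/
noncomputable def arensDualCongr (e : F ≃L[ℝ] G) : ArensDual G ≃L[ℝ] ArensDual F where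
  toFun := arensPrecomp e
  invFun := arensPrecomp e.symm
  map_add' f g := ContinuousLinearMap.add_comp _ _ _
  map_smul' c f := ContinuousLinearMap.smul_comp c _ _
  left_inv f := by
    apply ContinuousLinearMap.ext
    intro y
    show f (e (e.symm y)) = f y
    exact congrArg _ (e.apply_symm_apply y)
  right_inv f := by
    apply ContinuousLinearMap.ext
    intro x
    show f (e.symm (e x)) = f x
    exact congrArg _ (e.symm_apply_apply x)
  continuous_toFun := arensDualCongr_continuous_aux e
  continuous_invFun := arensDualCongr_continuous_aux e.symm

@[simp] theorem arensDualCongr_apply (e : F ≃L[ℝ] G) (f : ArensDual G) (x : F) :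
    arensDualCongr e f x = f (e x) := rfl

@[simp] theorem arensDualCongr_symm_apply (e : F ≃L[ℝ] G) (f : ArensDual F) (y : G) :
    (arensDualCongr e).symm f y = f (e.symm y) := rfl

end ArensDualAPI

end AuxiliaryLemmas

set_option maxHeartbeats 4000000 in
/-- A Hausdorff locally convex space `E` over `ℝ` is k-reflexive (it is
k-quasi-complete and the canonical evaluation map `E → (E'_k)'_k` is a topological
isomorphism) iff the canonical evaluation map `E → (E'_c)'_c` is a topological isomorphism
and both `E` and its Arens dual `E'_c` are k-quasi-complete. -/
theorem kReflexive_iff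
    (E : Type*) [AddCommGroup E] [Module ℝ E] [UniformSpace E] [IsUniformAddGroup E]
    [ContinuousSMul ℝ E] [LocallyConvexSpace ℝ E] [T2Space E]
    [UniformContinuousConstSMul ℝ E] :
    (KQuasiComplete E ∧
      ∃ e : E ≃L[ℝ] kDual (kDual E),
        ∀ (x : E) (f : kDual E),
          (e x) (toKQuasiCompletion _ f) = f (toKQuasiCompletion _ x)) ↔
    ((∃ e : E ≃L[ℝ] ArensDual (ArensDual E), ∀ (x : E) (f : ArensDual E), (e x) f = f x) ∧
      KQuasiComplete E ∧ KQuasiComplete (ArensDual E)) := by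
  haveI : ContinuousSMul ℝ (kDual E) := arensDual_continuousSMul
  haveI : LocallyConvexSpace ℝ (kDual E) :=
    arensDual_locallyConvex (kQuasiComplete_kQuasiCompletion E)
  haveI : T2Space (kDual E) := arensDual_t2Space
  constructor
  · rintro ⟨hE, e₁, he₁⟩
    have hEsurj := surjective_toKQuasiCompletion E hE
    set ι := kqcEquiv E hEsurj with hι
    set Φ : kDual E ≃L[ℝ] ArensDual E := arensDualCongr ι with hΦ
    have hisurj : Function.Surjective (toKQuasiCompletion (kDual E)) := by
      intro y
      set φ : ArensDual E := (evalArensCLM y).comp (e₁ : E →L[ℝ] kDual (kDual E)) with hφ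
      refine ⟨Φ.symm φ, ?_⟩
      have key : ∀ g : kDual (kDual E),
          g (toKQuasiCompletion (kDual E) (Φ.symm φ)) = g y := by
        intro g
        obtain ⟨x, rfl⟩ := e₁.surjective g
        rw [he₁ x (Φ.symm φ)]
        calc (Φ.symm φ) (toKQuasiCompletion E x)
            = (Φ (Φ.symm φ)) x := rfl
          _ = φ x := congrArg (fun g : ArensDual E => g x) (Φ.apply_symm_apply φ)
          _ = (e₁ x) y := rfl
      by_contra hne
      obtain ⟨f, hf⟩ := SeparatingDual.exists_separating_of_ne (R := ℝ) hne
      exact hf (key f)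
    set ι₂ := kqcEquiv (kDual E) hisurj with hι₂
    have hDkqc : KQuasiComplete (kDual E) :=
      KQuasiComplete.congr ι₂.symm (kQuasiComplete_kQuasiCompletion (kDual E))
    refine ⟨⟨e₁.trans ((arensDualCongr ι₂).trans (arensDualCongr Φ).symm), ?_⟩,
      hE, KQuasiComplete.congr Φ hDkqc⟩
    intro x f
    calc (e₁.trans ((arensDualCongr ι₂).trans (arensDualCongr Φ).symm) x) f
        = (e₁ x) (toKQuasiCompletion (kDual E) (Φ.symm f)) := rfl
      _ = (Φ.symm f) (toKQuasiCompletion E x) := he₁ x (Φ.symm f)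
      _ = (Φ (Φ.symm f)) x := rfl
      _ = f x := congrArg (fun g : ArensDual E => g x) (Φ.apply_symm_apply f)
  · rintro ⟨⟨e₂, he₂⟩, hE, hAD⟩
    have hEsurj := surjective_toKQuasiCompletion E hE
    let ι := kqcEquiv E hEsurj
    let Φ : kDual E ≃L[ℝ] ArensDual E := arensDualCongr ι
    have hDkqc : KQuasiComplete (kDual E) := KQuasiComplete.congr Φ.symm hAD
    have hisurj := surjective_toKQuasiCompletion (kDual E) hDkqc
    let ι₂ := kqcEquiv (kDual E) hisurj
    refine ⟨hE, e₂.trans ((arensDualCongr Φ).trans (arensDualCongr ι₂).symm), ?_⟩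
    intro x f
    calc (e₂.trans ((arensDualCongr Φ).trans (arensDualCongr ι₂).symm) x)
          (toKQuasiCompletion (kDual E) f)
        = (e₂ x) (Φ (ι₂.symm (ι₂ f))) := rfl
      _ = (e₂ x) (Φ f) := congrArg (fun g => (e₂ x) (Φ g)) (ι₂.symm_apply_apply f)
      _ = (Φ f) x := he₂ x (Φ f)
      _ = f (toKQuasiCompletion E x) := rfl
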